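/- arXiv:1804.07367 — 4 statements merged into one kernel-verified Lean document; each statement's English description precedes it below -/
import Mathlib

section
/- If k and k' are Brauer equivalent number fields (i.e., there is an isomorphism Φ between Br(k) and Br(k') commuting with all restriction maps from common subfields and to common overfields), then [k:ℚ] = [k':ℚ]. -/
/- Preliminary definitions: an abstract Brauer-group theory (the Brauer group
functor together with restriction maps and the class map on algebras), Brauer
equivalence of number fields, quaternion algebras, ramification at finite and
infinite places, splitting of rational primes, orders, etc. -/

open NumberField Module IsDedekindDomain
open scoped TensorProduct

noncomputable section

/-- An assignment, to every field, of its Brauer group, together with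
restriction maps induced by field embeddings and the map sending a central
simple algebra to its Brauer class. -/
structure BrauerTheory : Type 1 where
  /-- the Brauer group of a field -/
  Br : ∀ (K : Type) [Field K], CommGrpCat.{0}
  /-- restriction along a field embedding, `[B] ↦ [B ⊗ K]` -/
  res : ∀ {F K : Type} [Field F] [Field K], (F →+* K) → (Br F ⟶ Br K)
  /-- the Brauer class of a central simple algebra -/
  cls : ∀ (K : Type) [Field K] (A : Type) [Ring A] [Algebra K A], Br K

/-- Two number fields `k` and `k'` are *Brauer equivalent* if there is an
isomorphism of their Brauer groups commuting with the restriction maps coming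
from all common subfields and with the restriction maps to all common
overfields. -/
def BrauerEquivalent (T : BrauerTheory) (k k' : Type) [Field k] [Field k'] : Prop :=
  ∃ Φ : T.Br k ≃* T.Br k',
    (∀ (F : Type) [Field F] [NumberField F] [Algebra F k] [Algebra F k'] (x : T.Br F),
        Φ (T.res (algebraMap F k) x) = T.res (algebraMap F k') x) ∧
    (∀ (L : Type) [Field L] [NumberField L] [Algebra k L] [Algebra k' L] (x : T.Br k),
        T.res (algebraMap k' L) (Φ x) = T.res (algebraMap k L) x)

/-- A quaternion algebra over `F` : a 4-dimensional central simple `F`-algebra. -/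
def IsQuaternionAlgebra (F A : Type) [Field F] [Ring A] [Algebra F A] : Prop :=
  Algebra.IsCentral F A ∧ IsSimpleRing A ∧ Module.finrank F A = 4

/-- An `F`-algebra `A` is ramified at a finite place `v` of the number field `F`
if `A ⊗_F F_v` is a division algebra. -/
def RamifiedAtFin (F : Type) [Field F] [NumberField F]
    (A : Type) [Ring A] [Algebra F A]
    (v : HeightOneSpectrum (𝓞 F)) : Prop :=
  ∀ x : (v.adicCompletion F) ⊗[F] A, x ≠ 0 → IsUnit x

/-- An `F`-algebra `A` is ramified at an infinite place `v` of the number field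
`F` if `A ⊗_F F_v` is a division algebra. -/
def RamifiedAtInf (F : Type) [Field F] [NumberField F]
    (A : Type) [Ring A] [Algebra F A]
    (v : InfinitePlace F) : Prop :=
  ∀ x : v.Completion ⊗[F] A, x ≠ 0 → IsUnit x

/-- The set of (nonzero) primes of the ring of integers of `K` lying above the
rational prime `p`. -/
def PrimesOver (K : Type) [Field K] (p : ℕ) : Set (Ideal (𝓞 K)) :=
  {P | P.IsPrime ∧ P ≠ ⊥ ∧ (p : 𝓞 K) ∈ P}

/-- The inertia degree `f(P/p)` of a prime `P` of `K` over the rational prime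
`p`, computed as the multiplicity of `p` in the cardinality of the residue
field. -/
def inertiaDegOver (K : Type) [Field K] (p : ℕ) (P : Ideal (𝓞 K)) : ℕ :=
  (Nat.card ((𝓞 K) ⧸ P)).factorization p

/-- The ramification index `e(P/p)` of a prime `P` of `K` over the rational
prime `p`. -/
def ramIdxOver (K : Type) [Field K] (p : ℕ) (P : Ideal (𝓞 K)) : ℕ :=
  Ideal.ramificationIdx' (Ideal.span {(p : ℤ)}) P

/-- A rational prime `p` is unramified in the number field `K`. -/
def UnramifiedIn (K : Type) [Field K] (p : ℕ) : Prop :=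
  ∀ P ∈ PrimesOver K p, ramIdxOver K p P = 1

/-- A rational prime `p` splits completely in the number field `K`. -/
def SplitsCompletely (K : Type) [Field K] (p : ℕ) : Prop :=
  ∀ P ∈ PrimesOver K p, ramIdxOver K p P = 1 ∧ inertiaDegOver K p P = 1

/-- A finite prime `v` of `F` splits completely in the extension `K/F`. -/
def SplitsCompletelyAt (F K : Type) [Field F] [Field K] [Algebra F K]
    (v : Ideal (𝓞 F)) : Prop :=
  ∀ P : Ideal (𝓞 K), P.IsPrime → P ≠ ⊥ → P.comap (algebraMap (𝓞 F) (𝓞 K)) = v →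
    Ideal.ramificationIdx' v P = 1 ∧
    Ideal.inertiaDeg' v P = 1

/-- A finite prime `v` of `F` is unramified in the extension `K/F`. -/
def UnramifiedAtRel (F K : Type) [Field F] [Field K] [Algebra F K]
    (v : Ideal (𝓞 F)) : Prop :=
  ∀ P : Ideal (𝓞 K), P.IsPrime → P ≠ ⊥ → P.comap (algebraMap (𝓞 F) (𝓞 K)) = v →
    Ideal.ramificationIdx' v P = 1

/-- The local degree `[K_P : F_v] = e(P/v) · f(P/v)` of the extension `K/F` at a
prime `P` of `K` lying over the prime `v` of `F`. -/
def localDegreeAt (F K : Type) [Field F] [Field K] [Algebra F K]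
    (v : Ideal (𝓞 F)) (P : Ideal (𝓞 K)) : ℕ :=
  Ideal.ramificationIdx' v P *
    Ideal.inertiaDeg' v P

/-- The Galois kernel of a number field `k`: the maximal subfield of `k` which
is Galois over `ℚ`. -/
def galoisKernel (k : Type) [Field k] [NumberField k] : IntermediateField ℚ k :=
  ⨆ E ∈ {E : IntermediateField ℚ k | IsGalois ℚ E}, E

/-- An `𝓞 K`-order in a `K`-algebra `A` : a subring which is an `𝓞 K`-submodule,
finitely generated as a `ℤ`-module, and containing a `K`-basis of `A`. -/
def IsOrder (K A : Type) [Field K] [Ring A] [Algebra K A] (O : Subring A) : Prop :=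
  (∀ (c : 𝓞 K), ∀ x ∈ O, algebraMap K A (algebraMap (𝓞 K) K c) * x ∈ O) ∧
  (∃ s : Finset A, ((Submodule.span ℤ (s : Set A) : Submodule ℤ A) : Set A) = (O : Set A)) ∧
  Submodule.span K (O : Set A) = ⊤

/-- A maximal order in a `K`-algebra `A`. -/
def IsMaximalOrder (K A : Type) [Field K] [Ring A] [Algebra K A] (O : Subring A) : Prop :=
  IsOrder K A O ∧ ∀ O' : Subring A, IsOrder K A O' → O ≤ O' → O' = O

/-- A totally positive element of a number field. -/
def TotallyPositive (K : Type) [Field K] (a : K) : Prop :=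
  ∀ φ : K →+* ℂ, ComplexEmbedding.IsReal φ → 0 < (φ a).re

/-- A number field has narrow class number one : every nonzero ideal of its ring
of integers is generated by a totally positive element. -/
def NarrowClassNumberOne (K : Type) [Field K] : Prop :=
  ∀ I : Ideal (𝓞 K), I ≠ ⊥ →
    ∃ a : 𝓞 K, I = Ideal.span {a} ∧ TotallyPositive K (algebraMap (𝓞 K) K a)

/-- If `k` and `k'` are Brauer equivalent number fields, then
`[k : ℚ] = [k' : ℚ]`.  The two auxiliary hypotheses record the classical facts
that for a finite Galois extension `L/K` of number fields the relative Brauer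
group `Br(L/K)` contains a class of order `[L:K]`, and that (since index equals
exponent over number fields) the order of any class split by `L` divides
`[L:K]`. -/
theorem brauerEquivalent_finrank_eq (T : BrauerTheory)
    (hdiv : ∀ (K L : Type) [Field K] [Field L] [NumberField K] [NumberField L]
      [Algebra K L] [IsGalois K L],
      ∃ D : T.Br K, T.res (algebraMap K L) D = 1 ∧ orderOf D = Module.finrank K L)
    (hexp : ∀ (K L : Type) [Field K] [Field L] [NumberField K] [NumberField L]
      [Algebra K L] [IsGalois K L] (D : T.Br K),
      T.res (algebraMap K L) D = 1 → orderOf D ∣ Module.finrank K L)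
    (k k' : Type) [Field k] [Field k'] [NumberField k] [NumberField k']
    (h : BrauerEquivalent T k k') :
    Module.finrank ℚ k = Module.finrank ℚ k' := by
  obtain ⟨Φ, -, h2⟩ := h
  -- construct a common Galois overfield L
  let Ω := AlgebraicClosure ℚ
  let f : k →ₐ[ℚ] Ω := IsAlgClosed.lift
  let g : k' →ₐ[ℚ] Ω := IsAlgClosed.lift
  let E : IntermediateField ℚ Ω := f.fieldRange ⊔ g.fieldRange
  haveI : FiniteDimensional ℚ E := by
    haveI : FiniteDimensional ℚ f.fieldRange := f.toLinearMap.finiteDimensional_range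
    haveI : FiniteDimensional ℚ g.fieldRange := g.toLinearMap.finiteDimensional_range
    exact IntermediateField.finiteDimensional_sup _ _
  let L : IntermediateField ℚ Ω := IntermediateField.normalClosure ℚ E Ω
  haveI : FiniteDimensional ℚ L := normalClosure.is_finiteDimensional ℚ E Ω
  haveI : IsGalois ℚ L := by
    haveI : IsAlgClosure ℚ Ω := AlgebraicClosure.instIsAlgClosure ℚ
    haveI : Normal ℚ Ω := IsAlgClosure.normal ℚ Ω
    have hN : Normal ℚ (IntermediateField.normalClosure ℚ E Ω) := normalClosure.normal ℚ E Ω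
    exact @IsGalois.mk _ _ _ _ _ inferInstance hN
  haveI : NumberField L := ⟨⟩
  have hfL : f.fieldRange ≤ L := le_sup_left.trans (IntermediateField.le_normalClosure E)
  have hgL : g.fieldRange ≤ L := le_sup_right.trans (IntermediateField.le_normalClosure E)
  let fL : k →ₐ[ℚ] L := (IntermediateField.inclusion hfL).comp
    (AlgHom.codRestrict f f.fieldRange.toSubalgebra (fun x => ⟨x, rfl⟩))
  let gL : k' →ₐ[ℚ] L := (IntermediateField.inclusion hgL).comp
    (AlgHom.codRestrict g g.fieldRange.toSubalgebra (fun x => ⟨x, rfl⟩))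
  letI : Algebra k L := fL.toRingHom.toAlgebra
  letI : Algebra k' L := gL.toRingHom.toAlgebra
  haveI : IsScalarTower ℚ k L :=
    IsScalarTower.of_algebraMap_eq (fun x => (fL.commutes x).symm)
  haveI : IsScalarTower ℚ k' L :=
    IsScalarTower.of_algebraMap_eq (fun x => (gL.commutes x).symm)
  haveI : IsGalois k L := IsGalois.tower_top_of_isGalois ℚ k L
  haveI : IsGalois k' L := IsGalois.tower_top_of_isGalois ℚ k' L
  -- main argument
  obtain ⟨D, hD1, hDord⟩ := hdiv k L
  obtain ⟨D', hD'1, hD'ord⟩ := hdiv k' L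
  have d1 : finrank k L ∣ finrank k' L := by
    have hsplit : T.res (algebraMap k' L) (Φ D) = 1 := (h2 L D).trans hD1
    have := hexp k' L (Φ D) hsplit
    rwa [show orderOf (Φ D) = orderOf D from orderOf_injective Φ.toMonoidHom Φ.injective D, hDord] at this
  have d2 : finrank k' L ∣ finrank k L := by
    have hsplit : T.res (algebraMap k L) (Φ.symm D') = 1 := by
      have := h2 L (Φ.symm D')
      rw [Φ.apply_symm_apply] at this
      rw [← this, hD'1]
    have := hexp k L (Φ.symm D') hsplit
    rwa [show orderOf (Φ.symm D') = orderOf D' from orderOf_injective Φ.symm.toMonoidHom Φ.symm.injective D', hD'ord] at this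
  have heq : finrank k L = finrank k' L := Nat.dvd_antisymm d1 d2
  have h1 : finrank ℚ k * finrank k L = finrank ℚ L := finrank_mul_finrank ℚ k L
  have h2' : finrank ℚ k' * finrank k' L = finrank ℚ L := finrank_mul_finrank ℚ k' L
  have hpos : 0 < finrank k L := finrank_pos
  apply Nat.eq_of_mul_eq_mul_right hpos
  rw [h1, heq, h2']

end
end

section
/- If k and k' are Brauer equivalent number fields and k/ℚ is Galois, then k ≅ k'. -/
/- Preliminary definitions: an abstract Brauer-group theory (the Brauer group
functor together with restriction maps and the class map on algebras), Brauer
equivalence of number fields, quaternion algebras, ramification at finite and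
infinite places, splitting of rational primes, orders, etc. -/

open NumberField Module IsDedekindDomain
open scoped TensorProduct

noncomputable section

lemma myGaloisKernel_eq_top (k : Type) [Field k] [NumberField k] [IsGalois ℚ k] :
    galoisKernel k = ⊤ := by
  apply top_le_iff.mp
  exact le_iSup₂ (f := fun E (_ : E ∈ {E : IntermediateField ℚ k | IsGalois ℚ E}) => E) ⊤
    (IsGalois.of_algEquiv (IntermediateField.topEquiv (F := ℚ) (E := k)).symm)

/-- If `k` and `k'` are Brauer equivalent number fields and `k/ℚ`
is Galois, then `k ≅ k'`.  One may assume the previous results: Brauer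
equivalent number fields have the same degree over `ℚ` and isomorphic Galois
kernels. -/
theorem brauerEquivalent_iso_of_isGalois (T : BrauerTheory)
    (hdeg : ∀ (K K' : Type) [Field K] [Field K'] [NumberField K] [NumberField K'],
      BrauerEquivalent T K K' → Module.finrank ℚ K = Module.finrank ℚ K')
    (hker : ∀ (K K' : Type) [Field K] [Field K'] [NumberField K] [NumberField K'],
      BrauerEquivalent T K K' →
      Nonempty ((galoisKernel K) ≃ₐ[ℚ] (galoisKernel K')))
    (k k' : Type) [Field k] [Field k'] [NumberField k] [NumberField k']
    [IsGalois ℚ k] (h : BrauerEquivalent T k k') :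
    Nonempty (k ≃ₐ[ℚ] k') := by
  obtain ⟨e⟩ := hker k k' h
  have hd : finrank ℚ k = finrank ℚ k' := hdeg k k' h
  have h1 : galoisKernel k = ⊤ := myGaloisKernel_eq_top k
  have hfin : finrank ℚ (galoisKernel k') = finrank ℚ k' := by
    rw [← e.toLinearEquiv.finrank_eq, h1, ← hd]
    exact (IntermediateField.topEquiv (F := ℚ) (E := k)).toLinearEquiv.finrank_eq
  have h2 : galoisKernel k' = ⊤ := by
    have := Submodule.eq_top_of_finrank_eq (S := (galoisKernel k').toSubalgebra.toSubmodule)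
      (by simpa using hfin)
    apply IntermediateField.toSubalgebra_injective
    exact Subalgebra.toSubmodule_injective (by simpa using this)
  exact ⟨IntermediateField.topEquiv.symm.trans ((((IntermediateField.equivOfEq h1).symm.trans
    e).trans (IntermediateField.equivOfEq h2)).trans IntermediateField.topEquiv)⟩

end
end

section
/- If k and k' are Brauer equivalent number fields, then k and k' contain the same roots of unity, i.e., their groups of roots of unity are isomorphic. -/
/- Preliminary definitions: an abstract Brauer-group theory (the Brauer group
functor together with restriction maps and the class map on algebras), Brauer
equivalence of number fields, quaternion algebras, ramification at finite and
infinite places, splitting of rational primes, orders, etc. -/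

open NumberField Module IsDedekindDomain
open scoped TensorProduct

noncomputable section

/-- Auxiliary: transport torsion subgroups along a `MulEquiv`. -/
def torsionCongrAux {G H : Type*} [CommGroup G] [CommGroup H] (e : G ≃* H) :
    CommGroup.torsion G ≃* CommGroup.torsion H where
  toFun x := ⟨e x, e.toMonoidHom.isOfFinOrder x.2⟩
  invFun y := ⟨e.symm y, e.symm.toMonoidHom.isOfFinOrder y.2⟩
  left_inv x := by ext; simp
  right_inv y := by ext; simp
  map_mul' x y := by ext; simp

/-- Auxiliary: every root of unity of a number field lies in its Galois kernel. -/
theorem torsion_mem_galoisKernelAux (k : Type) [Field k] [NumberField k] (u : kˣ)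
    (hu : IsOfFinOrder u) : ((u : kˣ) : k) ∈ galoisKernel k := by
  set ζ : k := (u : k)
  have hm : 0 < orderOf u := hu.orderOf_pos
  have hprim : IsPrimitiveRoot ζ (orderOf u) :=
    IsPrimitiveRoot.coe_units_iff.mpr (IsPrimitiveRoot.orderOf u)
  set m : ℕ+ := ⟨orderOf u, hm⟩
  have hprim' : IsPrimitiveRoot ζ (m : ℕ) := hprim
  haveI : NeZero (m : ℕ) := ⟨m.ne_zero⟩
  have hcyc : IsCyclotomicExtension {(m : ℕ)} ℚ (Algebra.adjoin ℚ ({ζ} : Set k)) :=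
    hprim'.adjoin_isCyclotomicExtension ℚ
  have hint : IsIntegral ℚ ζ := IsIntegral.of_finite ℚ ζ
  have heq : (IntermediateField.adjoin ℚ ({ζ} : Set k)).toSubalgebra =
      Algebra.adjoin ℚ ({ζ} : Set k) :=
    IntermediateField.adjoin_simple_toSubalgebra_of_isAlgebraic hint.isAlgebraic
  haveI hcyc2 : IsCyclotomicExtension {(m : ℕ)} ℚ (IntermediateField.adjoin ℚ ({ζ} : Set k)) :=
    IsCyclotomicExtension.equiv {(m : ℕ)} ℚ _ (Subalgebra.equivOfEq _ _ heq.symm)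
  haveI : NeZero ((m : ℕ) : ℚ) := ⟨by exact_mod_cast hm.ne'⟩
  have hgal : IsGalois ℚ (IntermediateField.adjoin ℚ ({ζ} : Set k)) :=
    IsCyclotomicExtension.isGalois {(m : ℕ)} ℚ _
  have hle : IntermediateField.adjoin ℚ ({ζ} : Set k) ≤ galoisKernel k :=
    le_iSup₂ (f := fun (E : IntermediateField ℚ k) (_ : IsGalois ℚ E) => E) _ hgal
  exact hle (IntermediateField.mem_adjoin_simple_self ℚ ζ)

/-- Auxiliary: the torsion of the unit group of a number field is isomorphic to the
torsion of the unit group of its Galois kernel. -/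
theorem torsionEquivGaloisKernelAux (k : Type) [Field k] [NumberField k] :
    Nonempty ((CommGroup.torsion ((galoisKernel k))ˣ) ≃* (CommGroup.torsion kˣ)) := by
  set E := galoisKernel k
  let f : Eˣ →* kˣ := Units.map (algebraMap E k : ↥E →* k)
  have hinj : Function.Injective f :=
    Units.map_injective (algebraMap E k).injective
  have hfin : ∀ x : Eˣ, IsOfFinOrder x → IsOfFinOrder (f x) := fun x hx =>
    f.isOfFinOrder hx
  let g : CommGroup.torsion Eˣ →* CommGroup.torsion kˣ :=
    { toFun := fun x => ⟨f x, hfin x x.2⟩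
      map_one' := by ext; simp
      map_mul' := fun x y => by ext; simp }
  refine ⟨MulEquiv.ofBijective g ⟨?_, ?_⟩⟩
  · intro x y hxy
    exact Subtype.ext (hinj (congrArg Subtype.val hxy))
  · rintro ⟨y, hy⟩
    have hmem : ((y : kˣ) : k) ∈ E := torsion_mem_galoisKernelAux k y hy
    have hz0 : (⟨(y : k), hmem⟩ : E) ≠ 0 := by
      intro h
      exact y.ne_zero (congrArg Subtype.val h)
    refine ⟨⟨Units.mk0 ⟨(y : k), hmem⟩ hz0, ?_⟩, ?_⟩
    · obtain ⟨n, hn, hyn⟩ := (isOfFinOrder_iff_pow_eq_one).mp hy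
      refine (isOfFinOrder_iff_pow_eq_one).mpr ⟨n, hn, ?_⟩
      apply hinj
      rw [map_pow, map_one]
      apply Units.ext
      show ((algebraMap E k) ⟨(y : k), hmem⟩) ^ n = 1
      have : ((y : kˣ) : k) ^ n = 1 := by
        have := congrArg (Units.val) hyn
        simpa using this
      simpa using this
    · apply Subtype.ext
      apply Units.ext
      rfl
/-- Brauer equivalent number fields have isomorphic groups of
roots of unity (that is, isomorphic torsion subgroups of their unit groups).
One may use the previously established fact that Brauer equivalent number
fields have isomorphic Galois kernels. -/
theorem brauerEquivalent_rootsOfUnity_iso (T : BrauerTheory)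
    (hker : ∀ (K K' : Type) [Field K] [Field K'] [NumberField K] [NumberField K'],
      BrauerEquivalent T K K' →
      Nonempty ((galoisKernel K) ≃ₐ[ℚ] (galoisKernel K')))
    (k k' : Type) [Field k] [Field k'] [NumberField k] [NumberField k']
    (h : BrauerEquivalent T k k') :
    Nonempty ((CommGroup.torsion kˣ) ≃* (CommGroup.torsion k'ˣ)) := by
  obtain ⟨e⟩ := hker k k' h
  obtain ⟨ek⟩ := torsionEquivGaloisKernelAux k
  obtain ⟨ek'⟩ := torsionEquivGaloisKernelAux k'
  exact ⟨(ek.symm.trans (torsionCongrAux (Units.mapEquiv e.toRingEquiv.toMulEquiv))).trans ek'⟩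

end
end

section
/- Let k and k' be Brauer equivalent number fields and p a rational prime such that p splits completely in the Galois closure of k over ℚ and p is unramified in k'. Then every prime of the Galois kernel k'₀ of k' above p has inertia degree 1; in particular p splits completely in k'₀/ℚ. -/
/- Preliminary definitions: an abstract Brauer-group theory (the Brauer group
functor together with restriction maps and the class map on algebras), Brauer
equivalence of number fields, quaternion algebras, ramification at finite and
infinite places, splitting of rational primes, orders, etc. -/

open NumberField Module IsDedekindDomain
open scoped TensorProduct

noncomputable section

section Helpers
set_option maxHeartbeats 1000000
set_option synthInstance.maxHeartbeats 400000

variable {p : ℕ}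

theorem mem_primesOver_maximal {K : Type} [Field K] [NumberField K] {P : Ideal (𝓞 K)}
    (hP : P ∈ PrimesOver K p) : P.IsMaximal :=
  hP.1.isMaximal hP.2.1

theorem comap_int_eq {K : Type} [Field K] [NumberField K] (hp : p.Prime) {P : Ideal (𝓞 K)}
    (hP : P ∈ PrimesOver K p) : P.comap (algebraMap ℤ (𝓞 K)) = Ideal.span {(p : ℤ)} := by
  haveI := hP.1
  have hmax : (Ideal.span {(p : ℤ)}).IsMaximal :=
    PrincipalIdealRing.isMaximal_of_irreducible (Nat.prime_iff_prime_int.mp hp).irreducible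
  have hle : Ideal.span {(p : ℤ)} ≤ P.comap (algebraMap ℤ (𝓞 K)) := by
    rw [Ideal.span_le]
    intro x hx
    rw [Set.mem_singleton_iff] at hx
    subst hx
    show algebraMap ℤ (𝓞 K) ((p : ℕ) : ℤ) ∈ P
    simpa using hP.2.2
  exact (hmax.eq_of_le (Ideal.IsPrime.comap _).ne_top hle).symm

theorem card_pow_aux {A B : Type} [Field A] [Ring B] [Algebra A B] [Finite A] [Finite B]
    [Nontrivial B] : ∃ m, 1 ≤ m ∧ Nat.card B = Nat.card A ^ m := by
  haveI : Fintype A := Fintype.ofFinite A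
  haveI : Fintype B := Fintype.ofFinite B
  haveI : Module.Finite A B := Module.finite_iff_finite.mpr ‹_›
  refine ⟨Module.finrank A B, Module.finrank_pos, by
    rw [Nat.card_eq_fintype_card, Nat.card_eq_fintype_card, card_eq_pow_finrank (K := A) (V := B)]⟩

theorem quot_charP {K : Type} [Field K] [NumberField K] (hp : p.Prime) {P : Ideal (𝓞 K)}
    (hP : P ∈ PrimesOver K p) : CharP ((𝓞 K) ⧸ P) p := by
  haveI := hP.1
  haveI : Nontrivial ((𝓞 K) ⧸ P) := Ideal.Quotient.nontrivial_iff.mpr hP.1.ne_top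
  have hp0 : ((p : ℕ) : (𝓞 K) ⧸ P) = 0 := by
    have h0 : (Ideal.Quotient.mk P) ((p : 𝓞 K)) = 0 := Ideal.Quotient.eq_zero_iff_mem.mpr hP.2.2
    simpa using h0
  have hchar : ringChar ((𝓞 K) ⧸ P) = p := by
    rcases hp.eq_one_or_self_of_dvd _ (ringChar.dvd hp0) with h | h
    · exfalso
      have h1 := CharP.cast_eq_zero ((𝓞 K) ⧸ P) (ringChar ((𝓞 K) ⧸ P))
      rw [h] at h1
      simp at h1
    · exact h
  exact hchar ▸ ringChar.charP _

theorem quot_finite {K : Type} [Field K] [NumberField K] {P : Ideal (𝓞 K)}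
    (hP : P ∈ PrimesOver K p) : Finite ((𝓞 K) ⧸ P) := by
  rw [← Ideal.absNorm_ne_zero_iff]
  simpa [Ideal.absNorm_eq_zero_iff] using hP.2.1

theorem card_quot_eq_pow {K : Type} [Field K] [NumberField K] (hp : p.Prime) {P : Ideal (𝓞 K)}
    (hP : P ∈ PrimesOver K p) :
    Nat.card ((𝓞 K) ⧸ P) = p ^ inertiaDegOver K p P ∧ 1 ≤ inertiaDegOver K p P := by
  haveI := hP.1
  haveI : Fact p.Prime := ⟨hp⟩
  haveI : Nontrivial ((𝓞 K) ⧸ P) := Ideal.Quotient.nontrivial_iff.mpr hP.1.ne_top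
  haveI := quot_charP hp hP
  haveI := quot_finite hP
  letI : Algebra (ZMod p) ((𝓞 K) ⧸ P) := ZMod.algebra _ p
  obtain ⟨m, hm1, hm⟩ := card_pow_aux (A := ZMod p) (B := (𝓞 K) ⧸ P)
  rw [Nat.card_zmod] at hm
  have hf : inertiaDegOver K p P = m := by
    show (Nat.card ((𝓞 K) ⧸ P)).factorization p = m
    rw [hm, hp.factorization_pow, Finsupp.single_eq_same]
  exact ⟨by rw [hf, hm], by rw [hf]; exact hm1⟩

theorem comap_mem_primesOver (F : Type) {K : Type} [Field F] [Field K] [NumberField F]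
    [NumberField K] [Algebra F K] (hp : p.Prime) {P : Ideal (𝓞 K)} (hP : P ∈ PrimesOver K p) :
    P.comap (algebraMap (𝓞 F) (𝓞 K)) ∈ PrimesOver F p ∧
      inertiaDegOver F p (P.comap (algebraMap (𝓞 F) (𝓞 K))) ∣ inertiaDegOver K p P := by
  haveI := hP.1
  set g := algebraMap (𝓞 F) (𝓞 K) with hg
  set P₀ := P.comap g with hP₀def
  have hpmem : (p : 𝓞 F) ∈ P₀ := by
    show g ((p : ℕ) : 𝓞 F) ∈ P
    simpa using hP.2.2
  have hP₀ : P₀ ∈ PrimesOver F p := by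
    refine ⟨Ideal.IsPrime.comap _, ?_, hpmem⟩
    intro hbot
    rw [hbot] at hpmem
    exact Nat.cast_ne_zero.mpr hp.ne_zero (Ideal.mem_bot.mp hpmem)
  haveI := hP₀.1
  haveI h₀max := mem_primesOver_maximal hP₀
  haveI hPmax := mem_primesOver_maximal hP
  haveI : Nontrivial ((𝓞 K) ⧸ P) := Ideal.Quotient.nontrivial_iff.mpr hP.1.ne_top
  haveI := quot_finite hP
  haveI := quot_finite hP₀
  obtain ⟨hcardK, hfK⟩ := card_quot_eq_pow hp hP
  obtain ⟨hcardF, hfF⟩ := card_quot_eq_pow hp hP₀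
  letI : Field ((𝓞 F) ⧸ P₀) := Ideal.Quotient.field P₀
  letI : Algebra ((𝓞 F) ⧸ P₀) ((𝓞 K) ⧸ P) := by
    exact Ideal.Quotient.algebraQuotientOfLEComap (le_refl P₀)
  obtain ⟨m, hm1, hm⟩ := card_pow_aux (A := (𝓞 F) ⧸ P₀) (B := (𝓞 K) ⧸ P)
  rw [hcardK, hcardF, ← pow_mul] at hm
  exact ⟨hP₀, ⟨m, Nat.pow_right_injective hp.two_le hm⟩⟩

theorem algebraMap_OK_injective (F K : Type) [Field F] [Field K] [NumberField F]
    [NumberField K] [Algebra F K] : Function.Injective (algebraMap (𝓞 F) (𝓞 K)) := by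
  have h : Function.Injective ((algebraMap (𝓞 K) K).comp (algebraMap (𝓞 F) (𝓞 K))) := by
    rw [← IsScalarTower.algebraMap_eq]
    exact fun a b hab => by
      have : algebraMap (𝓞 F) K a = algebraMap (𝓞 F) K b := hab
      rw [IsScalarTower.algebraMap_eq (𝓞 F) F K] at this
      exact FaithfulSMul.algebraMap_injective (𝓞 F) F
        ((algebraMap F K).injective (by simpa using this))
  exact fun a b hab => h (by simp [RingHom.comp_apply, hab])

theorem exists_primesOver_comap_eq {F K : Type} [Field F] [Field K] [NumberField F]
    [NumberField K] [Algebra F K] (hp : p.Prime) {P₀ : Ideal (𝓞 F)}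
    (hP₀ : P₀ ∈ PrimesOver F p) :
    ∃ P ∈ PrimesOver K p, P.comap (algebraMap (𝓞 F) (𝓞 K)) = P₀ := by
  haveI := hP₀.1
  haveI h₀max := mem_primesOver_maximal hP₀
  haveI : Algebra.IsIntegral (𝓞 F) (𝓞 K) :=
    ⟨fun x => IsIntegral.tower_top (R := ℤ) (Algebra.IsIntegral.isIntegral x)⟩
  have hker : RingHom.ker (algebraMap (𝓞 F) (𝓞 K)) ≤ P₀ := by
    rw [(RingHom.injective_iff_ker_eq_bot _).mp (algebraMap_OK_injective F K)]
    exact bot_le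
  obtain ⟨Q, hQmax, hQcomap⟩ := Ideal.exists_ideal_over_maximal_of_isIntegral P₀ hker
  have hpQ : (p : 𝓞 K) ∈ Q := by
    have : (p : 𝓞 F) ∈ Q.comap (algebraMap (𝓞 F) (𝓞 K)) := hQcomap ▸ hP₀.2.2
    simpa using this
  refine ⟨Q, ⟨hQmax.isPrime, ?_, hpQ⟩, hQcomap⟩
  intro hbot
  rw [hbot] at hpQ
  exact Nat.cast_ne_zero.mpr hp.ne_zero (Ideal.mem_bot.mp hpQ)

theorem unramifiedIn_of_tower {F K : Type} [Field F] [Field K] [NumberField F] [NumberField K]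
    [Algebra F K] (hp : p.Prime) (h : UnramifiedIn K p) : UnramifiedIn F p := by
  intro P₀ hP₀
  obtain ⟨P, hP, hcomap⟩ := exists_primesOver_comap_eq (K := K) hp hP₀
  haveI := hP.1
  haveI := hP₀.1
  have htower : ramIdxOver K p P = ramIdxOver F p P₀ *
      Ideal.ramificationIdx' P₀ P := by
    refine Ideal.ramificationIdx'_algebra_tower ?_ ?_ ?_
    · intro hbot
      have hm : algebraMap (𝓞 F) (𝓞 K) ((p : ℕ) : 𝓞 F) ∈
          Ideal.map (algebraMap (𝓞 F) (𝓞 K)) P₀ :=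
        Ideal.mem_map_of_mem _ hP₀.2.2
      rw [hbot] at hm
      exact Nat.cast_ne_zero.mpr hp.ne_zero (by simpa using Ideal.mem_bot.mp hm : ((p : ℕ) : 𝓞 K) = 0)
    · intro hbot
      have hm : algebraMap ℤ (𝓞 K) ((p : ℕ) : ℤ) ∈
          Ideal.map (algebraMap ℤ (𝓞 K)) (Ideal.span {((p : ℕ) : ℤ)}) :=
        Ideal.mem_map_of_mem _ (Ideal.mem_span_singleton_self _)
      rw [hbot] at hm
      exact Nat.cast_ne_zero.mpr hp.ne_zero (by simpa using Ideal.mem_bot.mp hm : ((p : ℕ) : 𝓞 K) = 0)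
    · exact Ideal.map_le_iff_le_comap.mpr (le_of_eq hcomap.symm)
  have h1 : ramIdxOver K p P = 1 := h P hP
  rw [htower] at h1
  exact Nat.dvd_one.mp ⟨_, h1.symm⟩

theorem splitsCompletely_of_tower {F K : Type} [Field F] [Field K] [NumberField F]
    [NumberField K] [Algebra F K] (hp : p.Prime) (h : SplitsCompletely K p) :
    SplitsCompletely F p := by
  intro P₀ hP₀
  refine ⟨unramifiedIn_of_tower (K := K) hp (fun P hP => (h P hP).1) P₀ hP₀, ?_⟩
  obtain ⟨P, hP, hcomap⟩ := exists_primesOver_comap_eq (K := K) hp hP₀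
  obtain ⟨-, hdvd⟩ := comap_mem_primesOver F hp hP
  rw [hcomap, (h P hP).2] at hdvd
  exact Nat.dvd_one.mp hdvd

theorem exists_mem_primesOver (K : Type) [Field K] [NumberField K] (hp : p.Prime) :
    ∃ P, P ∈ PrimesOver K p := by
  haveI hmax : (Ideal.span {((p : ℕ) : ℤ)}).IsMaximal :=
    PrincipalIdealRing.isMaximal_of_irreducible (Nat.prime_iff_prime_int.mp hp).irreducible
  have hker : RingHom.ker (algebraMap ℤ (𝓞 K)) ≤ Ideal.span {((p : ℕ) : ℤ)} := by
    rw [(RingHom.injective_iff_ker_eq_bot _).mp fun a b hab => by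
      exact_mod_cast (Int.cast_injective (α := 𝓞 K) (by simpa using hab) : a = b)]
    exact bot_le
  obtain ⟨Q, hQmax, hQcomap⟩ :=
    Ideal.exists_ideal_over_maximal_of_isIntegral (S := 𝓞 K) (Ideal.span {((p : ℕ) : ℤ)}) hker
  have hpQ : (p : 𝓞 K) ∈ Q := by
    have : ((p : ℕ) : ℤ) ∈ Q.comap (algebraMap ℤ (𝓞 K)) :=
      hQcomap ▸ Ideal.mem_span_singleton_self _
    simpa using this
  refine ⟨Q, hQmax.isPrime, ?_, hpQ⟩
  intro hbot
  rw [hbot] at hpQ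
  exact Nat.cast_ne_zero.mpr hp.ne_zero (Ideal.mem_bot.mp hpQ)

theorem inertiaDegOver_eq_of_galois {K : Type} [Field K] [NumberField K] [IsGalois ℚ K]
    (hp : p.Prime) {P Q : Ideal (𝓞 K)} (hP : P ∈ PrimesOver K p) (hQ : Q ∈ PrimesOver K p) :
    inertiaDegOver K p P = inertiaDegOver K p Q := by
  suffices h : Nat.card ((𝓞 K) ⧸ Q) = Nat.card ((𝓞 K) ⧸ P) by
    show (Nat.card _).factorization p = (Nat.card _).factorization p
    rw [h]
  haveI := hP.1
  haveI := hQ.1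
  haveI hPmax := mem_primesOver_maximal hP
  haveI hQmax := mem_primesOver_maximal hQ
  have key : ∃ σ : K ≃ₐ[ℚ] K, Q ≤ P.comap (galRestrict ℤ ℚ K (𝓞 K) σ) := by
    by_contra hcon
    push_neg at hcon
    have hnsub : ¬ ((Q : Set (𝓞 K)) ⊆ ⋃ σ ∈ ((Finset.univ : Finset (K ≃ₐ[ℚ] K)) :
        Set (K ≃ₐ[ℚ] K)), ((P.comap (galRestrict ℤ ℚ K (𝓞 K) σ) : Ideal (𝓞 K)) :
        Set (𝓞 K))) := by
      intro hss
      obtain ⟨σ, -, hle⟩ := (Ideal.subset_union_prime 1 1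
        (fun σ _ _ _ => Ideal.IsPrime.comap _)).mp hss
      exact hcon σ hle
    obtain ⟨x, hxQ, hx⟩ := Set.not_subset.mp hnsub
    simp only [Set.mem_iUnion, SetLike.mem_coe, not_exists] at hx
    have hx' : ∀ σ : K ≃ₐ[ℚ] K, (galRestrict ℤ ℚ K (𝓞 K) σ) x ∉ P := by
      intro σ hmem
      exact hx σ (Finset.mem_univ σ) (Ideal.mem_comap.mpr hmem)
    have hprod := prod_galRestrict_eq_norm ℤ ℚ K (𝓞 K) x
    have hQmem : (∏ σ : K ≃ₐ[ℚ] K, galRestrict ℤ ℚ K (𝓞 K) σ x) ∈ Q := by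
      obtain ⟨c, hc⟩ := Finset.dvd_prod_of_mem
        (fun σ : K ≃ₐ[ℚ] K => galRestrict ℤ ℚ K (𝓞 K) σ x) (Finset.mem_univ 1)
      rw [hc]
      have hx1 : galRestrict ℤ ℚ K (𝓞 K) 1 x = x := by rw [map_one]; rfl
      rw [hx1]
      exact Ideal.mul_mem_right _ _ hxQ
    have hPmem : (∏ σ : K ≃ₐ[ℚ] K, galRestrict ℤ ℚ K (𝓞 K) σ x) ∈ P := by
      rw [hprod] at hQmem ⊢
      have h1 : _ ∈ Q.comap (algebraMap ℤ (𝓞 K)) := hQmem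
      rw [comap_int_eq hp hQ, ← comap_int_eq hp hP] at h1
      exact h1
    obtain ⟨σ, -, hσ⟩ := Ideal.IsPrime.prod_mem_iff.mp hPmem
    exact hx' σ hσ
  obtain ⟨σ, hle⟩ := key
  set τ : (𝓞 K) ≃+* (𝓞 K) := (galRestrict ℤ ℚ K (𝓞 K) σ).toRingEquiv with hτ
  have hle' : Q ≤ P.comap ((τ : (𝓞 K) →+* (𝓞 K))) := hle
  have h3 : Q.map ((τ : (𝓞 K) →+* (𝓞 K))) = Q.comap τ.symm :=
    Ideal.map_comap_of_equiv (I := Q) τ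
  have hmap : Q.map ((τ : (𝓞 K) →+* (𝓞 K))) = P := by
    have h1 : Q.map ((τ : (𝓞 K) →+* (𝓞 K))) ≤ P := Ideal.map_le_iff_le_comap.mpr hle'
    have h2 : (Q.map ((τ : (𝓞 K) →+* (𝓞 K)))).IsMaximal := by
      rw [h3]
      exact Ideal.comap_isMaximal_of_surjective _ τ.symm.surjective
    exact h2.eq_of_le hPmax.ne_top h1
  exact Nat.card_congr (Ideal.quotientEquiv Q P τ hmap.symm).toEquiv

theorem isGalois_galoisKernel (k' : Type) [Field k'] [NumberField k'] :
    IsGalois ℚ ↥(galoisKernel k') := by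
  have hn : Normal ℚ ↥(galoisKernel k') := by
    have : galoisKernel k' =
        ⨆ E : {E : IntermediateField ℚ k' // IsGalois ℚ ↥E}, (E : IntermediateField ℚ k') := by
      rw [galoisKernel, iSup_subtype]
      rfl
    rw [this]
    haveI : ∀ E : {E : IntermediateField ℚ k' // IsGalois ℚ ↥E},
        Normal ℚ ↥(E : IntermediateField ℚ k') := fun E => E.2.to_normal
    exact IntermediateField.normal_iSup ℚ k' _ (h := this)
  exact { to_normal := hn }

end Helpers

/-- If `k` and `k'` are Brauer equivalent and the rational prime
`p` splits completely in the Galois closure of `k/ℚ` and is unramified in `k'`,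
then every prime of the Galois kernel `k'₀` of `k'` above `p` has inertia
degree one; in particular `p` splits completely in `k'₀/ℚ`.  The gcd theorem of
Linowitz–McReynolds–Miller may be assumed. -/
theorem splitsCompletely_galoisKernel_of_brauerEquivalent (T : BrauerTheory)
    (k k' : Type) [Field k] [Field k'] [NumberField k] [NumberField k']
    (h : BrauerEquivalent T k k')
    (hgcd : ∀ q : ℕ, q.Prime → UnramifiedIn k q → UnramifiedIn k' q →
      ∀ d : ℕ, (∀ P ∈ PrimesOver k q, d ∣ inertiaDegOver k q P) ↔
               (∀ P ∈ PrimesOver k' q, d ∣ inertiaDegOver k' q P))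
    (p : ℕ) (hp : p.Prime)
    (hsplit : SplitsCompletely (↥(IntermediateField.normalClosure ℚ k (AlgebraicClosure k))) p)
    (hunram : UnramifiedIn k' p) :
    (∀ P ∈ PrimesOver (↥(galoisKernel k')) p, inertiaDegOver (↥(galoisKernel k')) p P = 1) ∧
    SplitsCompletely (↥(galoisKernel k')) p := by
  classical
  haveI : NumberField ↥(IntermediateField.normalClosure ℚ k (AlgebraicClosure k)) :=
    { to_charZero := inferInstance, to_finiteDimensional := inferInstance }
  haveI : NumberField ↥(galoisKernel k') :=
    { to_charZero := inferInstance, to_finiteDimensional := inferInstance }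
  haveI : IsGalois ℚ ↥(galoisKernel k') := isGalois_galoisKernel k'
  have hsplitk : SplitsCompletely k p :=
    splitsCompletely_of_tower (K := ↥(IntermediateField.normalClosure ℚ k (AlgebraicClosure k))) hp hsplit
  have hUk : UnramifiedIn k p := fun P hP => (hsplitk P hP).1
  have main : ∀ P ∈ PrimesOver (↥(galoisKernel k')) p,
      inertiaDegOver (↥(galoisKernel k')) p P = 1 := by
    intro P hP
    have hdvd' : ∀ P' ∈ PrimesOver k' p,
        inertiaDegOver (↥(galoisKernel k')) p P ∣ inertiaDegOver k' p P' := by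
      intro P' hP'
      obtain ⟨hmem, hdvd⟩ := comap_mem_primesOver (↥(galoisKernel k')) hp hP'
      rw [inertiaDegOver_eq_of_galois hp hP hmem]
      exact hdvd
    have hk := (hgcd p hp hUk hunram _).mpr hdvd'
    obtain ⟨P₁, hP₁⟩ := exists_mem_primesOver k hp
    have h1 := hk P₁ hP₁
    rw [(hsplitk P₁ hP₁).2] at h1
    exact Nat.dvd_one.mp h1
  have ram : UnramifiedIn (↥(galoisKernel k')) p :=
    unramifiedIn_of_tower (K := k') hp hunram
  exact ⟨main, fun P hP => ⟨ram P hP, main P hP⟩⟩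

end
end
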